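/- Let 0 < μ < 1 be a real number and n a positive integer. Then the series Σ_{r=0}^∞ (1 − (1 − μ^r)^n) converges and satisfies ∫_0^∞ (1 − (1 − μ^r)^n) dr ≤ Σ_{r=0}^∞ (1 − (1 − μ^r)^n) ≤ 1 + ∫_0^∞ (1 − (1 − μ^r)^n) dr; consequently Σ_{r=0}^∞ (1 − (1 − μ^r)^n) ≤ 1 + (Σ_{k=1}^{n} 1/k)/(−log μ). -/

import Mathlib

open Finset

section Aux

variable {μ : ℝ}

private lemma aux_rpow_le_one (hμ0 : 0 < μ) (hμ1 : μ < 1) {x : ℝ} (hx : 0 ≤ x) :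
    μ ^ x ≤ 1 :=
  Real.rpow_le_one hμ0.le hμ1.le hx

private lemma aux_antitone (hμ0 : 0 < μ) (hμ1 : μ < 1) (n : ℕ) :
    AntitoneOn (fun x : ℝ => 1 - (1 - μ ^ x) ^ n) (Set.Ici 0) := by
  intro x hx y hy hxy
  simp only
  have h1 : μ ^ y ≤ μ ^ x := Real.rpow_le_rpow_of_exponent_ge hμ0 hμ1.le hxy
  have h2 : μ ^ x ≤ 1 := aux_rpow_le_one hμ0 hμ1 hx
  have h3 : (1 - μ ^ x) ^ n ≤ (1 - μ ^ y) ^ n := by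
    apply pow_le_pow_left₀ (by linarith) (by linarith)
  linarith

private lemma aux_nonneg (hμ0 : 0 < μ) (hμ1 : μ < 1) (n : ℕ) {x : ℝ} (hx : 0 ≤ x) :
    0 ≤ 1 - (1 - μ ^ x) ^ n := by
  have h2 : μ ^ x ≤ 1 := aux_rpow_le_one hμ0 hμ1 hx
  have h0 : (0 : ℝ) < μ ^ x := Real.rpow_pos_of_pos hμ0 x
  have : (1 - μ ^ x) ^ n ≤ 1 := pow_le_one₀ (by linarith) (by linarith)
  linarith

private lemma aux_le (hμ0 : 0 < μ) (hμ1 : μ < 1) (n : ℕ) {x : ℝ} (hx : 0 ≤ x) :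
    1 - (1 - μ ^ x) ^ n ≤ n * μ ^ x := by
  have h2 : μ ^ x ≤ 1 := aux_rpow_le_one hμ0 hμ1 hx
  have := one_add_mul_le_pow (a := -(μ ^ x)) (by linarith) n
  simp only [mul_neg, ← sub_eq_add_neg] at this
  nlinarith

private lemma aux_cont (hμ0 : 0 < μ) (n : ℕ) :
    Continuous (fun x : ℝ => 1 - (1 - μ ^ x) ^ n) := by
  have h : Continuous (fun x : ℝ => μ ^ x) :=
    continuous_const.rpow continuous_id (fun x => Or.inl hμ0.ne')
  fun_prop

private lemma aux_integrable (hμ0 : 0 < μ) (hμ1 : μ < 1) (n : ℕ) :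
    MeasureTheory.IntegrableOn (fun x : ℝ => 1 - (1 - μ ^ x) ^ n) (Set.Ioi 0) := by
  have hlog : Real.log μ < 0 := Real.log_neg hμ0 hμ1
  have hexp : MeasureTheory.IntegrableOn
      (fun x : ℝ => (n : ℝ) * Real.exp (-(-Real.log μ) * x)) (Set.Ioi 0) :=
    (exp_neg_integrableOn_Ioi 0 (by linarith)).const_mul _
  refine MeasureTheory.Integrable.mono hexp
    ((aux_cont hμ0 n).aestronglyMeasurable.restrict) ?_
  filter_upwards [MeasureTheory.ae_restrict_mem measurableSet_Ioi] with x hx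
  have hx0 : (0 : ℝ) ≤ x := le_of_lt hx
  have hrw : Real.exp (-(-Real.log μ) * x) = μ ^ x := by
    rw [Real.rpow_def_of_pos hμ0]; ring_nf
  rw [Real.norm_eq_abs, Real.norm_eq_abs, abs_of_nonneg (aux_nonneg hμ0 hμ1 n hx0), hrw,
    abs_of_nonneg (by positivity)]
  exact le_trans (aux_le hμ0 hμ1 n hx0) (by norm_num)

private lemma aux_integral_piece (hμ0 : 0 < μ) (hμ1 : μ < 1) (k : ℕ) :
    ∫ x in Set.Ioi (0 : ℝ), μ ^ x * (1 - μ ^ x) ^ k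
      = 1 / ((k + 1) * (-Real.log μ)) := by
  have hlog : Real.log μ < 0 := Real.log_neg hμ0 hμ1
  set c : ℝ := ((k : ℝ) + 1) * (-Real.log μ) with hc
  have hcpos : 0 < c := mul_pos (by positivity) (by linarith)
  have hF : ∀ x : ℝ, HasDerivAt (fun y : ℝ => (1 - μ ^ y) ^ (k + 1) / c)
      (μ ^ x * (1 - μ ^ x) ^ k) x := by
    intro x
    have h1 : HasDerivAt (fun y : ℝ => μ ^ y) (μ ^ x * Real.log μ) x :=
      (Real.hasStrictDerivAt_const_rpow hμ0 x).hasDerivAt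
    have h2 : HasDerivAt (fun y : ℝ => 1 - μ ^ y) (-(μ ^ x * Real.log μ)) x := by
      have := (hasDerivAt_const x (1 : ℝ)).sub h1; rwa [zero_sub] at this
    have h3 := (h2.pow (k + 1)).div_const c
    refine h3.congr_deriv (Eq.symm ?_)
    simp only [Nat.add_sub_cancel]
    rw [eq_div_iff hcpos.ne', hc]
    push_cast
    ring
  -- continuity of F
  have hcont : Continuous (fun y : ℝ => (1 - μ ^ y) ^ (k + 1) / c) := by
    have h : Continuous (fun x : ℝ => μ ^ x) :=
      continuous_const.rpow continuous_id (fun x => Or.inl hμ0.ne')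
    fun_prop
  -- integrability of the integrand
  have hgint : MeasureTheory.IntegrableOn
      (fun x : ℝ => μ ^ x * (1 - μ ^ x) ^ k) (Set.Ioi 0) := by
    have hexp : MeasureTheory.IntegrableOn
        (fun x : ℝ => Real.exp (-(-Real.log μ) * x)) (Set.Ioi 0) :=
      exp_neg_integrableOn_Ioi 0 (by linarith)
    have hgc : Continuous (fun x : ℝ => μ ^ x * (1 - μ ^ x) ^ k) := by
      have h : Continuous (fun x : ℝ => μ ^ x) :=
        continuous_const.rpow continuous_id (fun x => Or.inl hμ0.ne')
      fun_prop
    refine MeasureTheory.Integrable.mono hexp hgc.aestronglyMeasurable.restrict ?_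
    filter_upwards [MeasureTheory.ae_restrict_mem measurableSet_Ioi] with x hx
    have hx0 : (0 : ℝ) ≤ x := le_of_lt hx
    have hp : (0 : ℝ) < μ ^ x := Real.rpow_pos_of_pos hμ0 x
    have h2 : μ ^ x ≤ 1 := aux_rpow_le_one hμ0 hμ1 hx0
    have hrw : Real.exp (-(-Real.log μ) * x) = μ ^ x := by
      rw [Real.rpow_def_of_pos hμ0]; ring_nf
    have hb : (1 - μ ^ x) ^ k ≤ 1 := pow_le_one₀ (by linarith) (by linarith)
    rw [Real.norm_eq_abs, Real.norm_eq_abs, hrw,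
      abs_of_nonneg (mul_nonneg hp.le (pow_nonneg (by linarith) k)),
      abs_of_nonneg hp.le]
    nlinarith [pow_nonneg (by linarith : (0:ℝ) ≤ 1 - μ ^ x) k]
  -- limit of F at infinity
  have htend : Filter.Tendsto (fun y : ℝ => (1 - μ ^ y) ^ (k + 1) / c)
      Filter.atTop (nhds (1 / c)) := by
    have h0 : Filter.Tendsto (fun y : ℝ => μ ^ y) Filter.atTop (nhds 0) :=
      tendsto_rpow_atTop_of_base_lt_one μ (by linarith) hμ1
    have h1 : Filter.Tendsto (fun y : ℝ => (1 - μ ^ y) ^ (k + 1)) Filter.atTop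
        (nhds ((1 - 0) ^ (k + 1))) := ((tendsto_const_nhds.sub h0).pow (k + 1))
    simpa using h1.div_const c
  have := MeasureTheory.integral_Ioi_of_hasDerivAt_of_tendsto
    (hcont.continuousWithinAt) (fun x _ => hF x) hgint htend
  rw [this]
  simp [Real.rpow_zero, hc]

private lemma aux_integral_value (hμ0 : 0 < μ) (hμ1 : μ < 1) (n : ℕ) :
    (∫ x in Set.Ioi (0 : ℝ), (1 - (1 - μ ^ x) ^ n))
      = (∑ k ∈ Icc 1 n, (1 : ℝ) / k) / (-Real.log μ) := by
  have hlog : Real.log μ < 0 := Real.log_neg hμ0 hμ1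
  have hgc : ∀ k : ℕ, Continuous (fun x : ℝ => μ ^ x * (1 - μ ^ x) ^ k) := by
    intro k
    have h : Continuous (fun x : ℝ => μ ^ x) :=
      continuous_const.rpow continuous_id (fun x => Or.inl hμ0.ne')
    fun_prop
  have hgint : ∀ k : ℕ, MeasureTheory.IntegrableOn
      (fun x : ℝ => μ ^ x * (1 - μ ^ x) ^ k) (Set.Ioi 0) := by
    intro k
    have hexp : MeasureTheory.IntegrableOn
        (fun x : ℝ => Real.exp (-(-Real.log μ) * x)) (Set.Ioi 0) :=
      exp_neg_integrableOn_Ioi 0 (by linarith)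
    refine MeasureTheory.Integrable.mono hexp (hgc k).aestronglyMeasurable.restrict ?_
    filter_upwards [MeasureTheory.ae_restrict_mem measurableSet_Ioi] with x hx
    have hx0 : (0 : ℝ) ≤ x := le_of_lt hx
    have hp : (0 : ℝ) < μ ^ x := Real.rpow_pos_of_pos hμ0 x
    have h2 : μ ^ x ≤ 1 := aux_rpow_le_one hμ0 hμ1 hx0
    have hrw : Real.exp (-(-Real.log μ) * x) = μ ^ x := by
      rw [Real.rpow_def_of_pos hμ0]; ring_nf
    have hb : (1 - μ ^ x) ^ k ≤ 1 := pow_le_one₀ (by linarith) (by linarith)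
    rw [Real.norm_eq_abs, Real.norm_eq_abs, hrw,
      abs_of_nonneg (mul_nonneg hp.le (pow_nonneg (by linarith) k)),
      abs_of_nonneg hp.le]
    nlinarith [pow_nonneg (by linarith : (0:ℝ) ≤ 1 - μ ^ x) k]
  have hpt : ∀ x : ℝ, 1 - (1 - μ ^ x) ^ n
      = ∑ k ∈ range n, μ ^ x * (1 - μ ^ x) ^ k := by
    intro x
    have := geom_sum_mul (1 - μ ^ x) n
    rw [← Finset.mul_sum]
    linear_combination this
  calc (∫ x in Set.Ioi (0 : ℝ), (1 - (1 - μ ^ x) ^ n))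
      = ∫ x in Set.Ioi (0 : ℝ), ∑ k ∈ range n, μ ^ x * (1 - μ ^ x) ^ k := by
        refine MeasureTheory.integral_congr_ae ?_
        filter_upwards with x using hpt x
    _ = ∑ k ∈ range n, ∫ x in Set.Ioi (0 : ℝ), μ ^ x * (1 - μ ^ x) ^ k :=
        MeasureTheory.integral_finset_sum _ (fun k _ => hgint k)
    _ = ∑ k ∈ range n, 1 / (((k : ℝ) + 1) * (-Real.log μ)) := by
        refine Finset.sum_congr rfl fun k _ => ?_
        exact_mod_cast aux_integral_piece hμ0 hμ1 k
    _ = (∑ k ∈ Icc 1 n, (1 : ℝ) / k) / (-Real.log μ) := by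
        rw [← Finset.Ico_add_one_right_eq_Icc, Finset.sum_Ico_eq_sum_range, Finset.sum_div]
        refine Finset.sum_congr (by simp) fun k _ => ?_
        push_cast
        rw [div_div]
        ring_nf

end Aux

/-- For `0 < μ < 1` and a positive integer `n`, the series
`∑_{r=0}^∞ (1 − (1 − μ^r)ⁿ)` converges, is sandwiched between the integral
`∫_0^∞ (1 − (1 − μ^r)ⁿ) dr` and `1` plus that integral, and consequently is at most
`1 + (∑_{k=1}^n 1/k)/(−log μ)`. -/
theorem sum_expected_max_geometric_bounds (μ : ℝ) (hμ0 : 0 < μ) (hμ1 : μ < 1)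
    (n : ℕ) (hn : 1 ≤ n) :
    Summable (fun r : ℕ => 1 - (1 - μ ^ r) ^ n) ∧
    (∫ r in Set.Ioi (0 : ℝ), (1 - (1 - μ ^ r) ^ n)) ≤
      ∑' r : ℕ, (1 - (1 - μ ^ r) ^ n) ∧
    ∑' r : ℕ, (1 - (1 - μ ^ r) ^ n) ≤
      1 + ∫ r in Set.Ioi (0 : ℝ), (1 - (1 - μ ^ r) ^ n) ∧
    ∑' r : ℕ, (1 - (1 - μ ^ r) ^ n) ≤
      1 + (∑ k ∈ Icc 1 n, (1 : ℝ) / k) / (-Real.log μ) := by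
  have hterm : ∀ r : ℕ, (1 : ℝ) - (1 - μ ^ r) ^ n = 1 - (1 - μ ^ (r : ℝ)) ^ n := by
    intro r; rw [Real.rpow_natCast]
  -- nonnegativity of the terms
  have hnn : ∀ r : ℕ, 0 ≤ (1 : ℝ) - (1 - μ ^ r) ^ n := by
    intro r; rw [hterm r]; exact aux_nonneg hμ0 hμ1 n (Nat.cast_nonneg r)
  -- summability
  have hsum : Summable (fun r : ℕ => 1 - (1 - μ ^ r) ^ n) := by
    refine Summable.of_nonneg_of_le hnn (fun r => ?_)
      ((summable_geometric_of_lt_one hμ0.le hμ1).mul_left (n : ℝ))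
    have := aux_le hμ0 hμ1 n (Nat.cast_nonneg r)
    rw [← hterm r, Real.rpow_natCast] at this
    exact this
  have hint := aux_integrable hμ0 hμ1 n
  -- integral over [0, N] vs over Ioi 0
  have hIoc : ∀ N : ℕ, (∫ x in (0:ℝ)..(N:ℝ), (1 - (1 - μ ^ x) ^ n))
      ≤ ∫ x in Set.Ioi (0:ℝ), (1 - (1 - μ ^ x) ^ n) := by
    intro N
    rw [intervalIntegral.integral_of_le (Nat.cast_nonneg N)]
    refine MeasureTheory.setIntegral_mono_set hint ?_ ?_
    · filter_upwards [MeasureTheory.ae_restrict_mem measurableSet_Ioi] with x hx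
      exact aux_nonneg hμ0 hμ1 n (le_of_lt hx)
    · exact Filter.Eventually.of_forall fun x hx => hx.1
  have hanti : ∀ N : ℕ, AntitoneOn (fun x : ℝ => 1 - (1 - μ ^ x) ^ n)
      (Set.Icc (0:ℝ) (0 + N)) := fun N =>
    (aux_antitone hμ0 hμ1 n).mono (by
      rw [zero_add]
      exact fun x hx => hx.1)
  -- sum ≤ 1 + integral
  have hupper : ∑' r : ℕ, ((1:ℝ) - (1 - μ ^ r) ^ n)
      ≤ 1 + ∫ x in Set.Ioi (0:ℝ), (1 - (1 - μ ^ x) ^ n) := by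
    refine Summable.tsum_le_of_sum_range_le hsum fun N => ?_
    have hintnn : 0 ≤ ∫ x in Set.Ioi (0:ℝ), (1 - (1 - μ ^ x) ^ n) := by
      refine MeasureTheory.setIntegral_nonneg measurableSet_Ioi fun x hx => ?_
      exact aux_nonneg hμ0 hμ1 n (le_of_lt hx)
    cases N with
    | zero => simp only [Finset.sum_range_zero]; linarith
    | succ M =>
      rw [Finset.sum_range_succ']
      have h0 : (1 : ℝ) - (1 - μ ^ (0:ℕ)) ^ n = 1 := by
        simp [zero_pow (by omega : n ≠ 0)]
      rw [h0]
      have hle : ∑ i ∈ range M, ((1:ℝ) - (1 - μ ^ (i+1)) ^ n)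
          ≤ ∫ x in (0:ℝ)..(M:ℝ), (1 - (1 - μ ^ x) ^ n) := by
        have h := (hanti M).sum_le_integral
        rw [zero_add] at h
        refine le_trans (le_of_eq (Finset.sum_congr rfl fun i _ => ?_)) h
        rw [hterm (i+1), zero_add]
      linarith [hIoc M]
  -- integral ≤ sum
  have hlower : (∫ x in Set.Ioi (0:ℝ), (1 - (1 - μ ^ x) ^ n))
      ≤ ∑' r : ℕ, ((1:ℝ) - (1 - μ ^ r) ^ n) := by
    have htendsto : Filter.Tendsto (fun N : ℕ => ∫ x in (0:ℝ)..(N:ℝ),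
        (1 - (1 - μ ^ x) ^ n)) Filter.atTop
        (nhds (∫ x in Set.Ioi (0:ℝ), (1 - (1 - μ ^ x) ^ n))) :=
      MeasureTheory.intervalIntegral_tendsto_integral_Ioi 0 hint
        tendsto_natCast_atTop_atTop
    refine le_of_tendsto htendsto (Filter.Eventually.of_forall fun N => ?_)
    have h1 : (∫ x in (0:ℝ)..(0 + (N:ℝ)), (1 - (1 - μ ^ x) ^ n))
        ≤ ∑ i ∈ range N, ((1:ℝ) - (1 - μ ^ ((0:ℝ) + i)) ^ n) :=
      (hanti N).integral_le_sum
    rw [zero_add] at h1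
    have h2 : ∑ i ∈ range N, ((1:ℝ) - (1 - μ ^ ((0:ℝ) + i)) ^ n)
        = ∑ i ∈ range N, ((1:ℝ) - (1 - μ ^ i) ^ n) := by
      refine Finset.sum_congr rfl fun i _ => ?_
      rw [hterm i, zero_add]
    rw [h2] at h1
    exact le_trans h1 (Summable.sum_le_tsum _ (fun i _ => hnn i) hsum)
  refine ⟨hsum, hlower, hupper, ?_⟩
  rw [← aux_integral_value hμ0 hμ1 n]
  exact hupper
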